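/- Let g and h be integers with g ≥ h ≥ 2. There exists a constant C = C(g,h) > 0 such that for every positive integer n and every C_h[g] set A ⊆ {1,…,n}, we have |A| ≤ C · n^{1 - 1/h}. -/

import Mathlib

/-- `A` is a `C_h[g]` set: there do not exist a set `X` of `h` integers and `g` pairwise
distinct integers `k_1, …, k_g` such that `X + k_i ⊆ A` for every `i`. -/
def IsChgSet (h g : ℕ) (A : Set ℤ) : Prop :=
  ¬ ∃ (X : Finset ℤ) (k : Fin g → ℤ), X.card = h ∧ Function.Injective k ∧
      ∀ i : Fin g, ∀ x ∈ X, x + k i ∈ A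

/-- the minimum of a finset of integers (junk value `0` for `∅`). -/
def minZ (S : Finset ℤ) : ℤ := if h : S.Nonempty then S.min' h else 0

/-- the normalization of a finset: translate so that the minimum is `0`. -/
def normZ (S : Finset ℤ) : Finset ℤ := S.image (fun x => x - minZ S)

lemma card_normZ (S : Finset ℤ) : (normZ S).card = S.card :=
  Finset.card_image_of_injective _ sub_left_injective

lemma minZ_mem (S : Finset ℤ) (hS : S.Nonempty) : minZ S ∈ S := by
  simp only [minZ, dif_pos hS]; exact S.min'_mem hS

lemma minZ_le (S : Finset ℤ) (hS : S.Nonempty) {y : ℤ} (hy : y ∈ S) : minZ S ≤ y := by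
  simp only [minZ, dif_pos hS]; exact S.min'_le y hy

lemma zero_mem_normZ (S : Finset ℤ) (hS : S.Nonempty) : (0 : ℤ) ∈ normZ S :=
  Finset.mem_image.2 ⟨minZ S, minZ_mem S hS, by ring⟩

lemma key (g h : ℕ) (n : ℤ) (hg : 1 ≤ g) (hh : 1 ≤ h) (A : Finset ℤ)
    (hA : ↑A ⊆ Set.Icc (1:ℤ) n) (hch : IsChgSet h g ↑A) :
    A.card.choose h ≤ (g-1) * (Finset.Icc (1:ℤ) (n-1)).card.choose (h-1) := by
  classical
  rw [← Finset.card_powersetCard, ← Finset.card_powersetCard]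
  set t := ((Finset.Icc (1:ℤ) (n-1)).powersetCard (h-1)).image (insert (0:ℤ)) with ht
  have hSfacts : ∀ S ∈ A.powersetCard h, S ⊆ A ∧ S.card = h ∧ S.Nonempty := by
    intro S hS
    rw [Finset.mem_powersetCard] at hS
    refine ⟨hS.1, hS.2, Finset.card_pos.1 (by omega)⟩
  -- every normalized set lands in `t`
  have hmaps : ∀ S ∈ A.powersetCard h, normZ S ∈ t := by
    intro S hS
    obtain ⟨hSA, hScard, hSne⟩ := hSfacts S hS
    have h0 : (0:ℤ) ∈ normZ S := zero_mem_normZ S hSne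
    refine Finset.mem_image.2 ⟨(normZ S).erase 0, ?_, by rw [Finset.insert_erase h0]⟩
    rw [Finset.mem_powersetCard]
    constructor
    · intro x hx
      obtain ⟨hx0, hx'⟩ := Finset.mem_erase.1 hx
      obtain ⟨y, hy, rfl⟩ := Finset.mem_image.1 hx'
      have h1 : minZ S ≤ y := minZ_le S hSne hy
      have h2 : y ≤ n := (hA (hSA hy)).2
      have h3 : 1 ≤ minZ S := (hA (hSA (minZ_mem S hSne))).1
      rw [Finset.mem_Icc]
      omega
    · rw [Finset.card_erase_of_mem h0, card_normZ, hScard]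
  -- fibers of `normZ` have at most `g - 1` elements
  have hfib : ∀ T ∈ t, ((A.powersetCard h).filter (fun S => normZ S = T)).card ≤ g - 1 := by
    intro T hT
    by_contra hcon
    push_neg at hcon
    have hgle : g ≤ ((A.powersetCard h).filter (fun S => normZ S = T)).card := by omega
    obtain ⟨B, hBsub, hBcard⟩ := Finset.exists_subset_card_eq hgle
    have e : Fin g ≃ {x // x ∈ B} := (B.equivFin.trans (finCongr hBcard)).symm
    set Si : Fin g → Finset ℤ := fun i => (e i : Finset ℤ) with hSi
    have hSiprop : ∀ i, Si i ∈ A.powersetCard h ∧ normZ (Si i) = T := by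
      intro i
      have := hBsub (e i).2
      rw [Finset.mem_filter] at this
      exact this
    set k : Fin g → ℤ := fun i => minZ (Si i) with hk
    -- each `Si i` equals `T` shifted by `k i`
    have hTmem : ∀ i, ∀ x ∈ T, x + k i ∈ Si i := by
      intro i x hx
      obtain ⟨hmem, hnorm⟩ := hSiprop i
      rw [← hnorm] at hx
      obtain ⟨y, hy, rfl⟩ := Finset.mem_image.1 hx
      simpa [hk] using hy
    have hTcard : T.card = h := by
      obtain ⟨hmem, hnorm⟩ := hSiprop ⟨0, hg⟩
      rw [← hnorm, card_normZ]
      exact (hSfacts _ hmem).2.1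
    have hSieq : ∀ i, Si i = T.image (fun x => x + k i) := by
      intro i
      have hsub : T.image (fun x => x + k i) ⊆ Si i := by
        intro z hz
        obtain ⟨x, hx, rfl⟩ := Finset.mem_image.1 hz
        exact hTmem i x hx
      refine (Finset.eq_of_subset_of_card_le hsub ?_).symm
      rw [Finset.card_image_of_injective _ (add_left_injective _), hTcard,
        (hSfacts _ (hSiprop i).1).2.1]
    refine hch ⟨T, k, hTcard, ?_, fun i x hx => (hSfacts _ (hSiprop i).1).1 (hTmem i x hx)⟩
    intro i j hij
    have : Si i = Si j := by rw [hSieq i, hSieq j, hij]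
    have : e i = e j := Subtype.ext this
    exact e.injective this
  calc (A.powersetCard h).card ≤ (g-1) * t.card :=
        Finset.card_le_mul_card_image_of_maps_to hmaps _ hfib
    _ ≤ (g-1) * ((Finset.Icc (1:ℤ) (n-1)).powersetCard (h-1)).card := by
        exact Nat.mul_le_mul_left _ Finset.card_image_le

theorem stmt15 (g h : ℕ) (hgh : h ≤ g) (hh : 2 ≤ h) :
    ∃ C : ℝ, 0 < C ∧ ∀ n : ℕ, 0 < n → ∀ A : Finset ℤ,
      ↑A ⊆ Set.Icc (1 : ℤ) n → IsChgSet h g ↑A →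
      (A.card : ℝ) ≤ C * (n : ℝ) ^ (1 - (1 : ℝ) / h) := by
  classical
  set K : ℕ := 2 ^ h * h.factorial * g with hK
  refine ⟨((K + 2 * h : ℕ) : ℝ), by positivity, ?_⟩
  intro n hn A hA hch
  set m := A.card with hm
  set p : ℝ := 1 - (1 : ℝ) / h with hp
  have hh0 : (h : ℝ) ≠ 0 := by positivity
  have hp0 : 0 ≤ p := by
    rw [hp, sub_nonneg, div_le_one (by positivity)]
    exact_mod_cast hh.trans (le_refl h) |>.trans' (by norm_num)
  have hn1 : (1 : ℝ) ≤ (n : ℝ) := by exact_mod_cast hn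
  have hnp1 : (1 : ℝ) ≤ (n : ℝ) ^ p := Real.one_le_rpow hn1 hp0
  have hC1 : (1 : ℝ) ≤ ((K + 2 * h : ℕ) : ℝ) := by
    have : 1 ≤ K + 2 * h := by omega
    exact_mod_cast this
  by_cases hcase : m < 2 * h
  · calc (m : ℝ) ≤ ((K + 2 * h : ℕ) : ℝ) := by
          have : m ≤ K + 2 * h := by omega
          exact_mod_cast this
      _ ≤ _ := le_mul_of_one_le_right (by positivity) hnp1
  · push_neg at hcase
    -- counting bound from `key`
    have hkey := key g h (n : ℤ) (by omega) (by omega) A hA hch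
    have hIcc : (Finset.Icc (1:ℤ) ((n:ℤ)-1)).card = n - 1 := by
      rw [Int.card_Icc]
      omega
    rw [hIcc] at hkey
    -- natural-number bound: m ^ h ≤ K * n ^ (h - 1)
    have hnat : m ^ h ≤ K * n ^ (h - 1) := by
      calc m ^ h ≤ (2 * (m + 1 - h)) ^ h := Nat.pow_le_pow_left (by omega) h
        _ = 2 ^ h * (m + 1 - h) ^ h := by rw [Nat.mul_pow]
        _ ≤ 2 ^ h * m.descFactorial h :=
            Nat.mul_le_mul_left _ (m.pow_sub_le_descFactorial h)
        _ = 2 ^ h * (h.factorial * m.choose h) := by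
            rw [Nat.descFactorial_eq_factorial_mul_choose]
        _ ≤ 2 ^ h * (h.factorial * ((g - 1) * (n-1).choose (h-1))) := by
            exact Nat.mul_le_mul_left _ (Nat.mul_le_mul_left _ hkey)
        _ ≤ 2 ^ h * (h.factorial * (g * n ^ (h - 1))) := by
            refine Nat.mul_le_mul_left _ (Nat.mul_le_mul_left _ (Nat.mul_le_mul (by omega) ?_))
            calc (n-1).choose (h-1) ≤ (n-1) ^ (h-1) := Nat.choose_le_pow _ _
              _ ≤ n ^ (h-1) := Nat.pow_le_pow_left (by omega) _
        _ = K * n ^ (h - 1) := by ring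
    -- transfer to the reals
    have hmh : (m : ℝ) ^ h ≤ (K : ℝ) * (n : ℝ) ^ (h - 1 : ℕ) := by
      exact_mod_cast hnat
    rw [← pow_le_pow_iff_left₀ (by positivity) (by positivity) (show h ≠ 0 by omega)]
    have hnppow : ((n : ℝ) ^ p) ^ h = (n : ℝ) ^ (h - 1 : ℕ) := by
      rw [← Real.rpow_natCast ((n:ℝ) ^ p) h, ← Real.rpow_mul (by positivity)]
      have : p * h = ((h - 1 : ℕ) : ℝ) := by
        rw [hp]
        push_cast [Nat.cast_sub (by omega : 1 ≤ h)]
        field_simp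
      rw [this, Real.rpow_natCast]
    calc (m : ℝ) ^ h ≤ (K : ℝ) * (n : ℝ) ^ (h - 1 : ℕ) := hmh
      _ ≤ ((K + 2 * h : ℕ) : ℝ) ^ h * (n : ℝ) ^ (h - 1 : ℕ) := by
          refine mul_le_mul_of_nonneg_right ?_ (by positivity)
          calc (K : ℝ) ≤ ((K + 2 * h : ℕ) : ℝ) := by
                have : K ≤ K + 2 * h := by omega
                exact_mod_cast this
            _ ≤ ((K + 2 * h : ℕ) : ℝ) ^ h := le_self_pow₀ hC1 (by omega)
      _ = (((K + 2 * h : ℕ) : ℝ) * (n : ℝ) ^ p) ^ h := by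
          rw [mul_pow, hnppow]
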